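/- The unit square with vertices (0,0), (1,0), (0,1), (1,1) and the square with vertices (0,0), (1,0), (1,2), (2,2) are both lattice-regular, and they are not lattice-congruent to each other. -/
import Mathlib

section Aux

lemma image_range_eq' {α : Type*} {m : ℕ} (V : Fin m → α) (f : α → α) (σ : Fin m → Fin m)
    (hσ : Function.Surjective σ) (h : ∀ i, f (V i) = V (σ i)) :
    f '' Set.range V = Set.range V := by
  rw [← Set.range_comp, show f ∘ V = V ∘ σ from funext h, hσ.range_comp]

/-- rotations of square 1 -/
def Mr1 : Fin 4 → Matrix (Fin 2) (Fin 2) ℤ :=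
  ![![![1,0],![0,1]], ![![0,-1],![1,0]], ![![-1,0],![0,-1]], ![![0,1],![-1,0]]]
def br1 : Fin 4 → Fin 2 → ℤ := ![![0,0], ![1,0], ![1,1], ![0,1]]
/-- reflections of square 1 -/
def Ms1 : Fin 4 → Matrix (Fin 2) (Fin 2) ℤ :=
  ![![![0,1],![1,0]], ![![-1,0],![0,1]], ![![0,-1],![-1,0]], ![![1,0],![0,-1]]]
def bs1 : Fin 4 → Fin 2 → ℤ := ![![0,0], ![1,0], ![1,1], ![0,1]]

/-- rotations of square 2 -/
def Mr2 : Fin 4 → Matrix (Fin 2) (Fin 2) ℤ :=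
  ![![![1,0],![0,1]], ![![1,-1],![2,-1]], ![![-1,0],![0,-1]], ![![-1,1],![-2,1]]]
def br2 : Fin 4 → Fin 2 → ℤ := ![![0,0], ![1,0], ![2,2], ![1,2]]
/-- reflections of square 2 -/
def Ms2 : Fin 4 → Matrix (Fin 2) (Fin 2) ℤ :=
  ![![![1,0],![2,-1]], ![![-1,1],![0,1]], ![![-1,0],![-2,1]], ![![1,-1],![0,-1]]]
def bs2 : Fin 4 → Fin 2 → ℤ := ![![0,0], ![1,0], ![2,2], ![1,2]]

lemma rot1 : ∀ k i : Fin 4, (Mr1 k).mulVec (![![0,0],![1,0],![1,1],![0,1]] i) + br1 k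
    = ![![0,0],![1,0],![1,1],![0,1]] (i + k) := by decide
lemma ref1 : ∀ k i : Fin 4, (Ms1 k).mulVec (![![0,0],![1,0],![1,1],![0,1]] i) + bs1 k
    = ![![0,0],![1,0],![1,1],![0,1]] (k - i) := by decide
lemma rot2 : ∀ k i : Fin 4, (Mr2 k).mulVec (![![0,0],![1,0],![2,2],![1,2]] i) + br2 k
    = ![![0,0],![1,0],![2,2],![1,2]] (i + k) := by decide
lemma ref2 : ∀ k i : Fin 4, (Ms2 k).mulVec (![![0,0],![1,0],![2,2],![1,2]] i) + bs2 k
    = ![![0,0],![1,0],![2,2],![1,2]] (k - i) := by decide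

lemma detMr1 : ∀ k : Fin 4, (Mr1 k).det = 1 ∨ (Mr1 k).det = -1 := by decide
lemma detMs1 : ∀ k : Fin 4, (Ms1 k).det = 1 ∨ (Ms1 k).det = -1 := by decide
lemma detMr2 : ∀ k : Fin 4, (Mr2 k).det = 1 ∨ (Mr2 k).det = -1 := by decide
lemma detMs2 : ∀ k : Fin 4, (Ms2 k).det = 1 ∨ (Ms2 k).det = -1 := by decide

lemma surj_add : ∀ k : Fin 4, Function.Surjective (· + k : Fin 4 → Fin 4) := by decide
lemma surj_sub : ∀ k : Fin 4, Function.Surjective (k - · : Fin 4 → Fin 4) := by decide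

lemma img_r1 (k : Fin 4) :
    (fun x => (Mr1 k).mulVec x + br1 k) '' Set.range ![![0,0],![1,0],![1,1],![0,1]]
      = Set.range ![![0,0],![1,0],![1,1],![0,1]] :=
  image_range_eq' _ _ (· + k) (surj_add k) (rot1 k)
lemma img_s1 (k : Fin 4) :
    (fun x => (Ms1 k).mulVec x + bs1 k) '' Set.range ![![0,0],![1,0],![1,1],![0,1]]
      = Set.range ![![0,0],![1,0],![1,1],![0,1]] :=
  image_range_eq' _ _ (k - ·) (surj_sub k) (ref1 k)
lemma img_r2 (k : Fin 4) :
    (fun x => (Mr2 k).mulVec x + br2 k) '' Set.range ![![0,0],![1,0],![2,2],![1,2]]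
      = Set.range ![![0,0],![1,0],![2,2],![1,2]] :=
  image_range_eq' _ _ (· + k) (surj_add k) (rot2 k)
lemma img_s2 (k : Fin 4) :
    (fun x => (Ms2 k).mulVec x + bs2 k) '' Set.range ![![0,0],![1,0],![2,2],![1,2]]
      = Set.range ![![0,0],![1,0],![2,2],![1,2]] :=
  image_range_eq' _ _ (k - ·) (surj_sub k) (ref2 k)

lemma finA : ∀ i i' : Fin 4, i + (i' - i) = i' := by decide
lemma finB : ∀ i i' : Fin 4, i + 1 + (i' - i) = i' + 1 := by decide
lemma finC : ∀ i i' : Fin 4, (i + i' + 1) - i = i' + 1 := by decide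
lemma finD : ∀ i i' : Fin 4, (i + i' + 1) - (i + 1) = i' := by decide

end Aux

/-- The real point corresponding to an integer point. -/
def toR2 (v : Fin 2 → ℤ) : Fin 2 → ℝ := fun i => (v i : ℝ)

/-- The points `V 0, …, V (m-1)` are in strictly convex position:
each one is a vertex (extreme point) of the convex hull of all of them. -/
def ConvexPosition (m : ℕ) (V : Fin m → Fin 2 → ℤ) : Prop :=
  ∀ i, toR2 (V i) ∉ convexHull ℝ (toR2 '' (V '' {j | j ≠ i}))

/-- `(u, w)` is a face-flag of the polygon with vertices `V 0, …, V (m-1)`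
(in cyclic order): `u` is a vertex of the polygon and `w` is the other
endpoint of an edge at `u`. -/
def AdjPair (m : ℕ) [NeZero m] (V : Fin m → Fin 2 → ℤ) (u w : Fin 2 → ℤ) : Prop :=
  ∃ i : Fin m, (u = V i ∧ w = V (i + 1)) ∨ (u = V (i + 1) ∧ w = V i)

/-- The polygon with vertices `V 0, …, V (m-1)` (in cyclic order) is
lattice-regular: for any two face-flags there is a lattice-affine
transformation preserving the polygon and taking one flag to the other. -/
def LatticeRegular (m : ℕ) [NeZero m] (V : Fin m → Fin 2 → ℤ) : Prop :=
  ∀ u w u' w' : Fin 2 → ℤ, AdjPair m V u w → AdjPair m V u' w' →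
    ∃ (A : Matrix (Fin 2) (Fin 2) ℤ) (b : Fin 2 → ℤ),
      (A.det = 1 ∨ A.det = -1) ∧
      ((fun x => A.mulVec x + b) '' Set.range V = Set.range V) ∧
      A.mulVec u + b = u' ∧ A.mulVec w + b = w'

/-- The unit square with vertices `(0,0), (1,0), (0,1), (1,1)` and the square
with vertices `(0,0), (1,0), (1,2), (2,2)` are both lattice-regular, but they
are not lattice-congruent to each other. -/
theorem two_squares_regular_not_congruent :
    LatticeRegular 4 ![![0,0], ![1,0], ![1,1], ![0,1]] ∧
    LatticeRegular 4 ![![0,0], ![1,0], ![2,2], ![1,2]] ∧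
    ¬ ∃ (A : Matrix (Fin 2) (Fin 2) ℤ) (b : Fin 2 → ℤ),
      (A.det = 1 ∨ A.det = -1) ∧
      (fun x => A.mulVec x + b) ''
          ({![0,0], ![1,0], ![1,1], ![0,1]} : Set (Fin 2 → ℤ)) =
        ({![0,0], ![1,0], ![1,2], ![2,2]} : Set (Fin 2 → ℤ)) := by
  refine ⟨?_, ?_, ?_⟩
  · intro u w u' w' h h'
    obtain ⟨i, hi⟩ := h
    obtain ⟨i', hi'⟩ := h'
    rcases hi with ⟨hu, hw⟩ | ⟨hu, hw⟩ <;> rcases hi' with ⟨hu', hw'⟩ | ⟨hu', hw'⟩ <;>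
      subst hu hw hu' hw'
    · exact ⟨Mr1 (i' - i), br1 (i' - i), detMr1 _, img_r1 _,
        by rw [rot1, finA], by rw [rot1, finB]⟩
    · exact ⟨Ms1 (i + i' + 1), bs1 (i + i' + 1), detMs1 _, img_s1 _,
        by rw [ref1, finC], by rw [ref1, finD]⟩
    · exact ⟨Ms1 (i + i' + 1), bs1 (i + i' + 1), detMs1 _, img_s1 _,
        by rw [ref1, finD], by rw [ref1, finC]⟩
    · exact ⟨Mr1 (i' - i), br1 (i' - i), detMr1 _, img_r1 _,
        by rw [rot1, finB], by rw [rot1, finA]⟩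
  · intro u w u' w' h h'
    obtain ⟨i, hi⟩ := h
    obtain ⟨i', hi'⟩ := h'
    rcases hi with ⟨hu, hw⟩ | ⟨hu, hw⟩ <;> rcases hi' with ⟨hu', hw'⟩ | ⟨hu', hw'⟩ <;>
      subst hu hw hu' hw'
    · exact ⟨Mr2 (i' - i), br2 (i' - i), detMr2 _, img_r2 _,
        by rw [rot2, finA], by rw [rot2, finB]⟩
    · exact ⟨Ms2 (i + i' + 1), bs2 (i + i' + 1), detMs2 _, img_s2 _,
        by rw [ref2, finC], by rw [ref2, finD]⟩
    · exact ⟨Ms2 (i + i' + 1), bs2 (i + i' + 1), detMs2 _, img_s2 _,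
        by rw [ref2, finD], by rw [ref2, finC]⟩
    · exact ⟨Mr2 (i' - i), br2 (i' - i), detMr2 _, img_r2 _,
        by rw [rot2, finB], by rw [rot2, finA]⟩
  · rintro ⟨A, b, hdet, himg⟩
    have even2 : ∀ v : Fin 2 → ℤ,
        v ∈ ({![0,0], ![1,0], ![1,2], ![2,2]} : Set (Fin 2 → ℤ)) → v 1 % 2 = 0 := by
      intro v hv
      simp only [Set.mem_insert_iff, Set.mem_singleton_iff] at hv
      rcases hv with rfl | rfl | rfl | rfl <;> decide
    have mem : ∀ v : Fin 2 → ℤ, v ∈ ({![0,0], ![1,0], ![1,1], ![0,1]} : Set (Fin 2 → ℤ)) →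
        (A.mulVec v + b) 1 % 2 = 0 := by
      intro v hv
      apply even2
      rw [← himg]
      exact Set.mem_image_of_mem _ hv
    have h0 := mem ![0,0] (by simp)
    have h1 := mem ![1,0] (by simp)
    have h2 := mem ![0,1] (by simp)
    have c0 : (A.mulVec ![0,0] + b) 1 = b 1 := by
      simp [Matrix.mulVec, dotProduct, Fin.sum_univ_two]
    have c1 : (A.mulVec ![1,0] + b) 1 = A 1 0 + b 1 := by
      simp [Matrix.mulVec, dotProduct, Fin.sum_univ_two]
    have c2 : (A.mulVec ![0,1] + b) 1 = A 1 1 + b 1 := by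
      simp [Matrix.mulVec, dotProduct, Fin.sum_univ_two]
    rw [c0] at h0; rw [c1] at h1; rw [c2] at h2
    have hev : A.det % 2 = 0 := by
      rw [Matrix.det_fin_two]
      obtain ⟨s, hs⟩ : ∃ s, A 1 0 = 2 * s := ⟨A 1 0 / 2, by omega⟩
      obtain ⟨t, ht⟩ : ∃ t, A 1 1 = 2 * t := ⟨A 1 1 / 2, by omega⟩
      rw [hs, ht]
      have : A 0 0 * (2 * t) - A 0 1 * (2 * s) = 2 * (A 0 0 * t - A 0 1 * s) := by ring
      rw [this]
      omega
    rcases hdet with h | h <;> rw [h] at hev <;> omega
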